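/- Let P be a symmetric positive definite n×n real matrix with maximum eigenvalue μ₊(P) and minimum eigenvalue μ₋(P), and let Ω = {x ∈ ℝⁿ | ⟨x, Px⟩ ≤ 1} be the associated ellipsoid. Then for r > 0, the set Ω is r-convex if and only if r ≥ μ₊(P)^{1/2} / μ₋(P). -/

import Mathlib

open Filter Metric Set
open scoped Topology RealInnerProductSpace NNReal

/-- A set `Ω` is `r`-convex if for all `x, y ∈ Ω` the intersection of all closed balls of
radius `r` containing both `x` and `y` (taken to be everything if no such ball exists)
is contained in `Ω`. -/
def RConvex {n : ℕ} (r : ℝ) (Ω : Set (EuclideanSpace ℝ (Fin n))) : Prop :=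
  ∀ x ∈ Ω, ∀ y ∈ Ω,
    {z : EuclideanSpace ℝ (Fin n) |
      ∀ c : EuclideanSpace ℝ (Fin n),
        x ∈ closedBall c r → y ∈ closedBall c r → z ∈ closedBall c r} ⊆ Ω

namespace EllipsoidAux

variable {n : ℕ}



/-- `P.mulVec` as a map on Euclidean space. -/
noncomputable def mv (P : Matrix (Fin n) (Fin n) ℝ) (x : EuclideanSpace ℝ (Fin n)) :
    EuclideanSpace ℝ (Fin n) :=
  (WithLp.equiv 2 (Fin n → ℝ)).symm (P.mulVec ((WithLp.equiv 2 (Fin n → ℝ)) x))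

lemma mv_apply (P : Matrix (Fin n) (Fin n) ℝ) (x : EuclideanSpace ℝ (Fin n)) (i : Fin n) :
    mv P x i = P.mulVec x i := rfl

/-- The quadratic form of the matrix `P`. -/
noncomputable def Q (P : Matrix (Fin n) (Fin n) ℝ) (x : EuclideanSpace ℝ (Fin n)) : ℝ :=
  ⟪x, mv P x⟫

lemma inner_eq (x y : EuclideanSpace ℝ (Fin n)) : ⟪x, y⟫ = ∑ i, x i * y i := by
  simp [PiLp.inner_apply, RCLike.inner_apply, mul_comm]

lemma Q_eq (P : Matrix (Fin n) (Fin n) ℝ) (x : EuclideanSpace ℝ (Fin n)) :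
    Q P x = ∑ i, x i * P.mulVec x i := inner_eq _ _

variable {P : Matrix (Fin n) (Fin n) ℝ}

lemma inner_mulVec_symm (hsymm : P.IsSymm) (u w : EuclideanSpace ℝ (Fin n)) :
    ⟪u, mv P w⟫ = ⟪w, mv P u⟫ := by
  rw [inner_eq, inner_eq]
  have h1 : ∑ i, u i * mv P w i = dotProduct (fun i => u i) (P.mulVec w) := rfl
  have h2 : ∑ i, w i * mv P u i = dotProduct (P.mulVec u) (fun i => w i) := by
    simp [dotProduct, mv_apply, mul_comm]
  rw [h1, h2, Matrix.dotProduct_mulVec]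
  congr 1
  rw [← Matrix.mulVec_transpose, hsymm.eq]

lemma mv_smul (a : ℝ) (x : EuclideanSpace ℝ (Fin n)) : mv P (a • x) = a • mv P x := by
  ext i
  rw [mv_apply]
  have : P.mulVec (a • (x : Fin n → ℝ)) = a • P.mulVec (x : Fin n → ℝ) := P.mulVec_smul a x
  calc P.mulVec (a • x : EuclideanSpace ℝ (Fin n)) i = (a • P.mulVec (x : Fin n → ℝ)) i := by
        rw [← this]; rfl
    _ = (a • mv P x) i := rfl

lemma mv_add (x y : EuclideanSpace ℝ (Fin n)) : mv P (x + y) = mv P x + mv P y := by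
  ext i
  have : P.mulVec ((x : Fin n → ℝ) + y) = P.mulVec (x : Fin n → ℝ) + P.mulVec (y : Fin n → ℝ) :=
    P.mulVec_add x y
  calc mv P (x + y) i = (P.mulVec ((x : Fin n → ℝ) + y)) i := rfl
    _ = (P.mulVec (x : Fin n → ℝ) + P.mulVec (y : Fin n → ℝ)) i := by rw [this]
    _ = (mv P x + mv P y) i := rfl

lemma Q_smul (a : ℝ) (x : EuclideanSpace ℝ (Fin n)) : Q P (a • x) = a ^ 2 * Q P x := by
  rw [Q, mv_smul, real_inner_smul_left, real_inner_smul_right, Q]; ring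

lemma Q_quad (hsymm : P.IsSymm) (x y : EuclideanSpace ℝ (Fin n)) :
    Q P (x + y) = Q P x + 2 * ⟪x, mv P y⟫ + Q P y := by
  rw [Q, mv_add, inner_add_left, inner_add_right, inner_add_right,
    inner_mulVec_symm hsymm y x, Q, Q]
  ring

lemma Q_sub (hsymm : P.IsSymm) (x y : EuclideanSpace ℝ (Fin n)) :
    Q P (x - y) = Q P x - 2 * ⟪x, mv P y⟫ + Q P y := by
  have := Q_quad hsymm x ((-1 : ℝ) • y)
  rw [mv_smul, real_inner_smul_right, Q_smul] at this
  simpa [sub_eq_add_neg] using this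

lemma repr_mv (hsymm : P.IsSymm) (hP : P.PosDef) (x : EuclideanSpace ℝ (Fin n)) (i : Fin n) :
    hP.1.eigenvectorBasis.repr (mv P x) i = hP.1.eigenvalues i * hP.1.eigenvectorBasis.repr x i := by
  rw [OrthonormalBasis.repr_apply_apply, OrthonormalBasis.repr_apply_apply,
    inner_mulVec_symm hsymm]
  have h : mv P (hP.1.eigenvectorBasis i) = hP.1.eigenvalues i • (hP.1.eigenvectorBasis i) := by
    ext j
    have := congrFun (hP.1.mulVec_eigenvectorBasis i) j
    exact this
  rw [h, real_inner_smul_right, real_inner_comm]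

lemma Q_repr (hsymm : P.IsSymm) (hP : P.PosDef) (x : EuclideanSpace ℝ (Fin n)) :
    Q P x = ∑ i, hP.1.eigenvalues i * (hP.1.eigenvectorBasis.repr x i)^2 := by
  rw [Q, ← hP.1.eigenvectorBasis.repr.inner_map_map x (mv P x), inner_eq]
  refine Finset.sum_congr rfl fun i _ => ?_
  rw [repr_mv hsymm hP]; ring

lemma norm_sq_repr (hP : P.PosDef) (x : EuclideanSpace ℝ (Fin n)) :
    ‖x‖^2 = ∑ i, (hP.1.eigenvectorBasis.repr x i)^2 := by
  rw [← real_inner_self_eq_norm_sq, ← hP.1.eigenvectorBasis.repr.inner_map_map x x, inner_eq]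
  refine Finset.sum_congr rfl fun i _ => ?_
  ring

lemma normsq_mv (hsymm : P.IsSymm) (hP : P.PosDef) (x : EuclideanSpace ℝ (Fin n)) :
    ‖mv P x‖^2 = ∑ i, (hP.1.eigenvalues i * hP.1.eigenvectorBasis.repr x i)^2 := by
  rw [norm_sq_repr hP (mv P x)]
  refine Finset.sum_congr rfl fun i _ => ?_
  rw [repr_mv hsymm hP]

lemma Q_lower (hn : 0 < n) (hsymm : P.IsSymm) (hP : P.PosDef) (x : EuclideanSpace ℝ (Fin n)) :
    (⨅ i, hP.1.eigenvalues i) * ‖x‖^2 ≤ Q P x := by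
  haveI : Nonempty (Fin n) := ⟨⟨0, hn⟩⟩
  rw [Q_repr hsymm hP, norm_sq_repr hP, Finset.mul_sum]
  refine Finset.sum_le_sum fun i _ => ?_
  exact mul_le_mul_of_nonneg_right (ciInf_le (Finite.bddBelow_range _) i) (sq_nonneg _)

lemma normsq_mv_le (hn : 0 < n) (hsymm : P.IsSymm) (hP : P.PosDef)
    (x : EuclideanSpace ℝ (Fin n)) :
    ‖mv P x‖^2 ≤ (⨆ i, hP.1.eigenvalues i) * Q P x := by
  haveI : Nonempty (Fin n) := ⟨⟨0, hn⟩⟩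
  rw [normsq_mv hsymm hP, Q_repr hsymm hP, Finset.mul_sum]
  refine Finset.sum_le_sum fun i _ => ?_
  have h1 : 0 < hP.1.eigenvalues i := hP.eigenvalues_pos i
  have h2 : hP.1.eigenvalues i ≤ ⨆ j, hP.1.eigenvalues j :=
    le_ciSup (Finite.bddAbove_range _) i
  nlinarith [sq_nonneg (hP.1.eigenvectorBasis.repr x i)]

lemma inf_pos (hn : 0 < n) (hP : P.PosDef) : 0 < ⨅ i, hP.1.eigenvalues i := by
  haveI : Nonempty (Fin n) := ⟨⟨0, hn⟩⟩
  obtain ⟨i, hi⟩ := exists_eq_ciInf_of_finite (f := hP.1.eigenvalues)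
  rw [← hi]; exact hP.eigenvalues_pos i

lemma Q_pos (hn : 0 < n) (hsymm : P.IsSymm) (hP : P.PosDef) {x : EuclideanSpace ℝ (Fin n)}
    (hx : x ≠ 0) : 0 < Q P x := by
  have h1 := Q_lower hn hsymm hP x
  have h2 := inf_pos hn hP
  have h3 : 0 < ‖x‖ := norm_pos_iff.2 hx
  nlinarith [mul_pos h2 (pow_pos h3 2)]

lemma norm_le_of_sq_le {v : EuclideanSpace ℝ (Fin n)} {r : ℝ} (hr : 0 ≤ r)
    (h : ‖v‖^2 ≤ r^2) : ‖v‖ ≤ r := by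
  nlinarith [norm_nonneg v]


variable {P : Matrix (Fin n) (Fin n) ℝ}

lemma mv_eigen (hP : P.PosDef) (i : Fin n) :
    mv P (hP.1.eigenvectorBasis i) = hP.1.eigenvalues i • hP.1.eigenvectorBasis i := by
  ext j
  exact congrFun (hP.1.mulVec_eigenvectorBasis i) j

lemma Q_eigen (hP : P.PosDef) (i : Fin n) : Q P (hP.1.eigenvectorBasis i) = hP.1.eigenvalues i := by
  rw [Q, mv_eigen hP, real_inner_smul_right, real_inner_self_eq_norm_sq,
    hP.1.eigenvectorBasis.orthonormal.1 i]
  ring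

lemma sup_pos (hn : 0 < n) (hP : P.PosDef) : 0 < ⨆ i, hP.1.eigenvalues i := by
  haveI : Nonempty (Fin n) := ⟨⟨0, hn⟩⟩
  obtain ⟨i, hi⟩ := exists_eq_ciSup_of_finite (f := hP.1.eigenvalues)
  rw [← hi]; exact hP.eigenvalues_pos i

/-- Backward direction: if `r` is at least the critical radius, the ellipsoid is r-convex. -/
lemma rconvex_of_le (hn : 0 < n) (hsymm : P.IsSymm) (hP : P.PosDef) {r : ℝ} (hr : 0 < r)
    (hR : Real.sqrt (⨆ i, hP.1.eigenvalues i) / (⨅ i, hP.1.eigenvalues i) ≤ r) :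
    RConvex r {x : EuclideanSpace ℝ (Fin n) | Q P x ≤ 1} := by
  intro x hx y hy z hz
  simp only [mem_setOf_eq] at hx hy ⊢
  by_contra hz1
  push_neg at hz1
  set μm := ⨅ i, hP.1.eigenvalues i with hμm_def
  set μp := ⨆ i, hP.1.eigenvalues i with hμp_def
  have hμm : 0 < μm := inf_pos hn hP
  have hμp : 0 < μp := sup_pos hn hP
  have hq : (0:ℝ) < Q P z := lt_trans one_pos hz1
  have hqs : 0 < Real.sqrt (Q P z) := Real.sqrt_pos.2 hq
  set p : EuclideanSpace ℝ (Fin n) := (Real.sqrt (Q P z))⁻¹ • z with hp_def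
  have hQp : Q P p = 1 := by
    rw [hp_def, Q_smul]
    rw [inv_pow, Real.sq_sqrt hq.le]
    field_simp
  set g : EuclideanSpace ℝ (Fin n) := mv P p with hg_def
  have hg1 : ⟪p, g⟫ = 1 := hQp
  have hgne : g ≠ 0 := by
    intro h
    rw [h, inner_zero_right] at hg1
    norm_num at hg1
  set N := ‖g‖ with hN_def
  have hN : 0 < N := norm_pos_iff.2 hgne
  have hNle : N ≤ Real.sqrt μp := by
    have h1 : N^2 ≤ μp * Q P p := normsq_mv_le hn hsymm hP p
    rw [hQp, mul_one] at h1
    rw [← Real.sqrt_sq hN.le]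
    exact Real.sqrt_le_sqrt h1
  have hNr : N ≤ r * μm := by
    have h2 : Real.sqrt μp ≤ r * μm := by
      rw [div_le_iff₀ hμm] at hR
      linarith
    linarith
  set c : EuclideanSpace ℝ (Fin n) := p - (r/N) • g with hc_def
  have hrN : ‖(r/N) • g‖ = r := by
    rw [norm_smul, Real.norm_eq_abs, abs_of_pos (div_pos hr hN), ← hN_def]
    field_simp
  have claimA : ∀ w : EuclideanSpace ℝ (Fin n), Q P w ≤ 1 → w ∈ closedBall c r := by
    intro w hw
    rw [mem_closedBall, dist_eq_norm]
    have hdecomp : w - c = (w - p) + (r/N) • g := by rw [hc_def]; abel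
    rw [hdecomp]
    apply norm_le_of_sq_le hr.le
    rw [norm_add_sq_real, hrN]
    have hI : ⟪w - p, (r/N) • g⟫ = (r/N) * ⟪w - p, g⟫ := real_inner_smul_right _ _ _
    set I := ⟪w - p, g⟫ with hI_def
    have hQpw : Q P (p - w) = 1 - 2 * ⟪w, g⟫ + Q P w := by
      rw [Q_sub hsymm p w, hQp, inner_mulVec_symm hsymm p w, ← hg_def]
    have hpw : ⟪p - w, g⟫ = 1 - ⟪w, g⟫ := by
      rw [inner_sub_left, hg1]
    have hIneg : I = -(1 - ⟪w, g⟫) := by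
      rw [hI_def, ← hpw, ← inner_neg_left]
      congr 1
      abel
    have hlow : μm * ‖p - w‖^2 ≤ Q P (p - w) := Q_lower hn hsymm hP _
    have hnorm : ‖p - w‖ = ‖w - p‖ := norm_sub_rev _ _
    have hIle : I ≤ -(μm * ‖w - p‖^2) / 2 := by
      rw [← hnorm]
      linarith [hlow, hQpw, hIneg, hw]
    have hrμ : 1 ≤ r * μm / N := by
      rw [le_div_iff₀ hN]
      linarith
    rw [hI]
    have h2 : 2 * ((r/N) * I) ≤ -‖w - p‖^2 := by
      have hI2 : 2 * ((r/N) * I) ≤ 2 * ((r/N) * (-(μm * ‖w - p‖^2) / 2)) := by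
        apply mul_le_mul_of_nonneg_left _ (by norm_num)
        exact mul_le_mul_of_nonneg_left hIle (le_of_lt (div_pos hr hN))
      have : 2 * ((r/N) * (-(μm * ‖w - p‖^2) / 2)) = -((r * μm / N) * ‖w - p‖^2) := by ring
      rw [this] at hI2
      have h3 := mul_le_mul_of_nonneg_right hrμ (sq_nonneg ‖w - p‖)
      rw [one_mul] at h3
      linarith
    linarith
  have claimB : z ∉ closedBall c r := by
    rw [mem_closedBall, dist_eq_norm, not_le]
    have hz_eq : z = Real.sqrt (Q P z) • p := by
      rw [hp_def, smul_smul]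
      rw [mul_inv_cancel₀ (ne_of_gt hqs), one_smul]
    have hdecomp : z - c = (Real.sqrt (Q P z) - 1) • p + (r/N) • g := by
      rw [hc_def, sub_smul, one_smul, ← hz_eq]
      abel
    have hsq1 : 1 < Real.sqrt (Q P z) := by
      have : Real.sqrt 1 < Real.sqrt (Q P z) := Real.sqrt_lt_sqrt (by norm_num) hz1
      rwa [Real.sqrt_one] at this
    have hexp : ‖z - c‖^2 = (Real.sqrt (Q P z) - 1)^2 * ‖p‖^2
        + 2 * ((Real.sqrt (Q P z) - 1) * (r/N) * 1) + r^2 := by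
      rw [hdecomp, norm_add_sq_real, hrN, norm_smul, Real.norm_eq_abs,
        real_inner_smul_left, real_inner_smul_right, hg1]
      rw [mul_pow, sq_abs]
      ring
    have hlt : r^2 < ‖z - c‖^2 := by
      rw [hexp]
      have t1 : 0 < (Real.sqrt (Q P z) - 1) * (r/N) := mul_pos (sub_pos.2 hsq1) (div_pos hr hN)
      have t2 : 0 ≤ (Real.sqrt (Q P z) - 1)^2 * ‖p‖^2 :=
        mul_nonneg (sq_nonneg _) (sq_nonneg _)
      linarith
    by_contra hcon
    push_neg at hcon
    have : ‖z - c‖^2 ≤ r^2 := by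
      have h0 : (0:ℝ) ≤ ‖z - c‖ := norm_nonneg _
      nlinarith
    linarith
  exact claimB (hz c (claimA x hx) (claimA y hy))

-- Forward direction: r-convexity forces `r` to be at least the critical radius.
set_option maxHeartbeats 1000000 in
lemma le_of_rconvex (hn : 0 < n) (hsymm : P.IsSymm) (hP : P.PosDef) {r : ℝ} (hr : 0 < r)
    (hRC : RConvex r {x : EuclideanSpace ℝ (Fin n) | Q P x ≤ 1}) :
    Real.sqrt (⨆ i, hP.1.eigenvalues i) / (⨅ i, hP.1.eigenvalues i) ≤ r := by
  haveI : Nonempty (Fin n) := ⟨⟨0, hn⟩⟩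
  by_contra hcon
  push_neg at hcon
  set μm := ⨅ i, hP.1.eigenvalues i with hμm_def
  set μp := ⨆ i, hP.1.eigenvalues i with hμp_def
  have hμm : 0 < μm := inf_pos hn hP
  have hμp : 0 < μp := sup_pos hn hP
  have hsμm : 0 < Real.sqrt μm := Real.sqrt_pos.2 hμm
  have hsμp : 0 < Real.sqrt μp := Real.sqrt_pos.2 hμp
  obtain ⟨j, hj⟩ := exists_eq_ciInf_of_finite (f := hP.1.eigenvalues)
  set f : EuclideanSpace ℝ (Fin n) := hP.1.eigenvectorBasis j with hf_def
  have hQf : Q P f = μm := by rw [hf_def, Q_eigen hP, hj]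
  have hnf : ‖f‖ = 1 := hP.1.eigenvectorBasis.orthonormal.1 j
  set a := (Real.sqrt μm)⁻¹ with ha_def
  have ha : 0 < a := inv_pos.2 hsμm
  have ha2 : a^2 * μm = 1 := by
    rw [ha_def, inv_pow, Real.sq_sqrt hμm.le]
    field_simp
  rcases lt_or_ge r a with hra | har
  · -- Case 1 : r < a; antipodal points are too far apart
    have hx : Q P (a • f) ≤ 1 := by rw [Q_smul, hQf, ha2]
    have hy : Q P ((-a) • f) ≤ 1 := by
      rw [Q_smul, hQf, neg_sq, ha2]
    have hzQ : Q P ((2*a) • f) = 4 := by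
      rw [Q_smul, hQf]
      linear_combination 4 * ha2
    have hlens : ∀ c : EuclideanSpace ℝ (Fin n),
        a • f ∈ closedBall c r → (-a) • f ∈ closedBall c r →
          (2*a) • f ∈ closedBall c r := by
      intro c h1 h2
      exfalso
      rw [mem_closedBall] at h1 h2
      have hd : dist (a • f) ((-a) • f) = 2 * a := by
        rw [dist_eq_norm, ← sub_smul, norm_smul, Real.norm_eq_abs, hnf, mul_one]
        rw [abs_of_pos (by linarith)]
        ring
      have htri := dist_triangle (a • f) c ((-a) • f)
      rw [hd, dist_comm c ((-a) • f)] at htri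
      linarith only [htri, h1, h2, hra]
    have := hRC _ hx _ hy hlens
    simp only [mem_setOf_eq, hzQ] at this
    linarith only [this]
  · -- Case 2 : a ≤ r < √μp/μm; the spindle argument
    have hμmp : μm < μp := by
      have h1 : a < Real.sqrt μp / μm := lt_of_le_of_lt har hcon
      rw [ha_def, inv_eq_one_div, div_lt_div_iff₀ hsμm hμm] at h1
      have e1 : Real.sqrt μm * Real.sqrt μm = μm := Real.mul_self_sqrt hμm.le
      have e2 : Real.sqrt μp * Real.sqrt μp = μp := Real.mul_self_sqrt hμp.le
      have h2 : Real.sqrt μm < Real.sqrt μp := by nlinarith [h1, e1, hsμm, hsμp]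
      nlinarith [e1, e2, h2, hsμm, hsμp]
    obtain ⟨i, hi⟩ := exists_eq_ciSup_of_finite (f := hP.1.eigenvalues)
    have hij : i ≠ j := by
      intro h
      rw [← h] at hj
      rw [hi] at hj
      exact absurd hj (ne_of_gt hμmp)
    set e : EuclideanSpace ℝ (Fin n) := hP.1.eigenvectorBasis i with he_def
    have hQe : Q P e = μp := by rw [he_def, Q_eigen hP, hi]
    have hne : ‖e‖ = 1 := hP.1.eigenvectorBasis.orthonormal.1 i
    have hef : ⟪e, f⟫ = 0 := hP.1.eigenvectorBasis.orthonormal.2 hij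
    set bb := (Real.sqrt μp)⁻¹ with hbb_def
    have hbb : 0 < bb := inv_pos.2 hsμp
    have hbb2 : μp * bb^2 = 1 := by
      rw [hbb_def, inv_pow, Real.sq_sqrt hμp.le]
      field_simp
    set θ := r * μm * bb with hθ_def
    have hθpos : 0 < θ := by positivity
    have hθ1 : θ < 1 := by
      have h1 : r * μm < Real.sqrt μp := (lt_div_iff₀ hμm).1 hcon
      calc θ = (r * μm) * bb := rfl
        _ < Real.sqrt μp * bb := mul_lt_mul_of_pos_right h1 hbb
        _ = 1 := by rw [hbb_def]; field_simp
    set m := max (2*θ - 1) 0 with hm_def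
    have hm0 : 0 ≤ m := le_max_right _ _
    have hm1 : m < 1 := by
      rw [hm_def, max_lt_iff]
      constructor <;> linarith only [hθ1]
    have hmθ : 2*θ - 1 ≤ m := le_max_left _ _
    have hm2 : m^2 < 1 := pow_lt_one₀ hm0 hm1 (by norm_num)
    set ε₀ := (1 - m^2)/2 with hε₀_def
    have hε₀pos : 0 < ε₀ := by rw [hε₀_def]; linarith only [hm2]
    have hε₀lt : ε₀ < 1 := by rw [hε₀_def]; linarith only [hm2, sq_nonneg m]
    have hsqm : m < Real.sqrt (1 - ε₀) := by
      have h1 : m^2 < 1 - ε₀ := by rw [hε₀_def]; linarith only [hm2]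
      have h2 : Real.sqrt (m^2) < Real.sqrt (1 - ε₀) := Real.sqrt_lt_sqrt (sq_nonneg _) h1
      rwa [Real.sqrt_sq hm0] at h2
    set s := min r (Real.sqrt (ε₀/μm)) with hs_def
    have hs0 : 0 < s := lt_min hr (Real.sqrt_pos.2 (div_pos hε₀pos hμm))
    have hsr : s ≤ r := min_le_left _ _
    set ε := μm * s^2 with hε_def
    have hεpos : 0 < ε := by positivity
    have hεε₀ : ε ≤ ε₀ := by
      have h1 : s ≤ Real.sqrt (ε₀/μm) := min_le_right _ _
      have h2 : s^2 ≤ ε₀/μm := by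
        rw [← Real.sq_sqrt (le_of_lt (div_pos hε₀pos hμm))]
        exact pow_le_pow_left₀ hs0.le h1 2
      rw [hε_def]
      rw [div_eq_inv_mul] at h2
      calc μm * s^2 ≤ μm * (μm⁻¹ * ε₀) := mul_le_mul_of_nonneg_left h2 hμm.le
        _ = ε₀ := by field_simp
    have hε1 : ε < 1 := lt_of_le_of_lt hεε₀ hε₀lt
    set w := Real.sqrt (1 - ε) with hw_def
    have hw0 : 0 < w := Real.sqrt_pos.2 (by linarith only [hε1])
    have hw2 : w^2 = 1 - ε := Real.sq_sqrt (by linarith only [hε1])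
    have hww : Real.sqrt (1 - ε₀) ≤ w := Real.sqrt_le_sqrt (by linarith only [hεε₀])
    set h := bb * w with hh_def
    have hh0 : 0 < h := mul_pos hbb hw0
    set ρ := Real.sqrt (r^2 - s^2) with hρ_def
    have hrs : 0 ≤ r^2 - s^2 := by
      have := pow_le_pow_left₀ hs0.le hsr 2
      linarith only [this]
    have hρ2 : ρ^2 = r^2 - s^2 := Real.sq_sqrt hrs
    have hρ0 : 0 ≤ ρ := Real.sqrt_nonneg _
    have hρr : ρ ≤ r := by
      have h1 : ρ ≤ Real.sqrt (r^2) := Real.sqrt_le_sqrt (by linarith only [sq_nonneg s])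
      rwa [Real.sqrt_sq hr.le] at h1
    set δ := r - ρ with hδ_def
    have hδ0 : 0 ≤ δ := by rw [hδ_def]; linarith only [hρr]
    -- the three points
    set x : EuclideanSpace ℝ (Fin n) := h • e + s • f with hx_def
    set y : EuclideanSpace ℝ (Fin n) := h • e - s • f with hy_def
    set z : EuclideanSpace ℝ (Fin n) := (h + δ) • e with hz_def
    have hcross : ∀ α β : ℝ, ⟪α • e, mv P (β • f)⟫ = 0 := by
      intro α β
      rw [mv_smul, hf_def, mv_eigen hP, real_inner_smul_left, real_inner_smul_right,
        real_inner_smul_right, ← hf_def, hef]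
      ring
    have hQx : Q P x = 1 := by
      rw [hx_def, Q_quad hsymm, Q_smul, Q_smul, hQe, hQf, hcross, hh_def]
      linear_combination w^2 * hbb2 + hw2 - hε_def
    have hQy : Q P y = 1 := by
      rw [hy_def, sub_eq_add_neg, ← neg_smul, Q_quad hsymm, Q_smul, Q_smul, hQe, hQf,
        hcross, hh_def]
      linear_combination w^2 * hbb2 + hw2 - hε_def
    have hlens : ∀ c : EuclideanSpace ℝ (Fin n),
        x ∈ closedBall c r → y ∈ closedBall c r → z ∈ closedBall c r := by
      intro c h1 h2
      rw [mem_closedBall, dist_eq_norm] at h1 h2 ⊢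
      set u : EuclideanSpace ℝ (Fin n) := c - h • e with hu_def
      have e1 : x - c = s • f - u := by rw [hx_def, hu_def]; abel
      have e2 : y - c = -(s • f) - u := by rw [hy_def, hu_def]; abel
      have e3 : z - c = δ • e - u := by
        rw [hz_def, hu_def, add_smul]
        abel
      rw [e1] at h1
      rw [e2] at h2
      have hpar : ‖s • f - u‖^2 + ‖-(s • f) - u‖^2 = 2*s^2 + 2*‖u‖^2 := by
        have q1 : ‖s • f - u‖^2 = ‖s • f‖^2 - 2*⟪s • f, u⟫ + ‖u‖^2 := norm_sub_sq_real _ _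
        have q2 : ‖-(s • f) - u‖^2 = ‖s • f‖^2 + 2*⟪s • f, u⟫ + ‖u‖^2 := by
          have e4 : -(s • f) - u = -(s • f + u) := by abel
          rw [e4, norm_neg, norm_add_sq_real]
        have q3 : ‖s • f‖^2 = s^2 := by
          rw [norm_smul, Real.norm_eq_abs, hnf, mul_one, sq_abs]
        rw [q1, q2, q3]
        ring
      have hu2 : ‖u‖^2 ≤ ρ^2 := by
        have b1 : ‖s • f - u‖^2 ≤ r^2 := pow_le_pow_left₀ (norm_nonneg _) h1 2
        have b2 : ‖-(s • f) - u‖^2 ≤ r^2 := pow_le_pow_left₀ (norm_nonneg _) h2 2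
        rw [hρ2]
        linarith only [hpar, b1, b2]
      have hu1 : ‖u‖ ≤ ρ := by
        have h3 := Real.sqrt_le_sqrt hu2
        rwa [Real.sqrt_sq (norm_nonneg u), Real.sqrt_sq hρ0] at h3
      rw [e3]
      calc ‖δ • e - u‖ ≤ ‖δ • e‖ + ‖u‖ := norm_sub_le _ _
        _ ≤ δ + ρ := by
            rw [norm_smul, Real.norm_eq_abs, hne, mul_one, abs_of_nonneg hδ0]
            linarith only [hu1]
        _ = r := by rw [hδ_def]; ring
    have hQz := hRC _ (le_of_eq hQx) _ (le_of_eq hQy) hlens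
    simp only [mem_setOf_eq] at hQz
    have hQz' : μp * (h + δ)^2 ≤ 1 := by
      rw [hz_def, Q_smul, hQe] at hQz
      linarith only [hQz]
    have hhδ : h + δ ≤ bb := by
      rw [← hbb2] at hQz'
      have h4 : (h + δ)^2 ≤ bb^2 := le_of_mul_le_mul_left hQz' hμp
      have h5 := Real.sqrt_le_sqrt h4
      rwa [Real.sqrt_sq (by linarith only [hh0, hδ0]), Real.sqrt_sq hbb.le] at h5
    have hδbb : δ ≤ bb - h := by linarith only [hhδ]
    -- quantitative estimates
    have f0 : δ * (r + ρ) = s^2 := by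
      rw [hδ_def]
      linear_combination -hρ2
    have f1 : s^2 ≤ δ * (2*r) := by
      have h6 : δ * (r + ρ) ≤ δ * (2*r) :=
        mul_le_mul_of_nonneg_left (by linarith only [hρr]) hδ0
      linarith only [f0, h6]
    have key : (bb - h) * (1 + w) = bb * ε := by
      rw [hh_def]
      linear_combination (-bb) * hw2
    have chain : s^2 * (1 + w) ≤ 2*r*(bb*ε) := by
      have c1 : s^2 * (1 + w) ≤ (δ * (2*r)) * (1 + w) :=
        mul_le_mul_of_nonneg_right f1 (by linarith only [hw0])
      have c2 : (δ * (2*r)) * (1 + w) ≤ ((bb - h) * (2*r)) * (1 + w) := by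
        apply mul_le_mul_of_nonneg_right _ (by linarith only [hw0])
        exact mul_le_mul_of_nonneg_right hδbb (by linarith only [hr])
      have c3 : ((bb - h) * (2*r)) * (1 + w) = 2*r*((bb - h) * (1 + w)) := by ring
      rw [c3, key] at c2
      linarith only [c1, c2]
    have hfin : 1 + w ≤ 2*θ := by
      have d1 : 2*r*(bb*ε) = s^2 * (2*θ) := by rw [hε_def, hθ_def]; ring
      rw [d1] at chain
      have hs2 : 0 < s^2 := by positivity
      exact le_of_mul_le_mul_left chain hs2
    have hlast : 2*θ - 1 < w := lt_of_le_of_lt hmθ (lt_of_lt_of_le hsqm hww)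
    linarith only [hfin, hlast]

end EllipsoidAux

/-- The ellipsoid `{x | ⟨x, P x⟩ ≤ 1}` associated to a symmetric positive definite matrix `P`
is `r`-convex if and only if `r ≥ μ₊(P)^{1/2} / μ₋(P)`, where `μ₊(P)` and `μ₋(P)` are the
largest and smallest eigenvalues of `P`. -/
theorem ellipsoid_rConvex_iff {n : ℕ} (hn : 0 < n)
    (P : Matrix (Fin n) (Fin n) ℝ) (hsymm : P.IsSymm) (hP : P.PosDef)
    (Ω : Set (EuclideanSpace ℝ (Fin n)))
    (hΩ : Ω = {x : EuclideanSpace ℝ (Fin n) | ∑ i, x i * P.mulVec x i ≤ 1})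
    (r : ℝ) (hr : 0 < r) :
    RConvex r Ω ↔ Real.sqrt (⨆ i, hP.1.eigenvalues i) / (⨅ i, hP.1.eigenvalues i) ≤ r := by
  have hset : Ω = {x : EuclideanSpace ℝ (Fin n) | EllipsoidAux.Q P x ≤ 1} := by
    rw [hΩ]
    ext x
    simp only [Set.mem_setOf_eq, EllipsoidAux.Q_eq]
  rw [hset]
  constructor
  · intro hRC
    exact EllipsoidAux.le_of_rconvex hn hsymm hP hr hRC
  · intro hR
    exact EllipsoidAux.rconvex_of_le hn hsymm hP hr hR
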